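/- Let p = (2/5, 2/5, 1/10, 1/10) and q = (1/2, 1/4, 1/4, 0) be probability vectors on Fin 4, and let φ = (3/5, 2/5) be a probability vector on Fin 2. Then ¬(p ≺ q), ¬(q ≺ p), and p ⊗ φ ≺ q ⊗ φ. -/
import Mathlib

set_option maxRecDepth 10000

open Finset

/-- max over finsets of card k of the sum of entries -/
noncomputable def maxSum {ι : Type*} [Fintype ι] (p : ι → ℝ) (k : ℕ) : ℝ :=
  sSup {x : ℝ | ∃ S : Finset ι, S.card = k ∧ x = ∑ i ∈ S, p i}

/-- majorization: equal total sums, and for each k the max k-term partial sum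
of `p` is at most that of `q`. -/
def Maj {ι : Type*} [Fintype ι] (p q : ι → ℝ) : Prop :=
  (∑ i, p i = ∑ i, q i) ∧ ∀ k : ℕ, maxSum p k ≤ maxSum q k

/-- tensor product of two vectors -/
def tensor {ι κ : Type*} (p : ι → ℝ) (r : κ → ℝ) : ι × κ → ℝ :=
  fun x => p x.1 * r x.2

lemma maxSum_bddAbove {ι : Type*} [Fintype ι] (p : ι → ℝ) (k : ℕ) :
    BddAbove {x : ℝ | ∃ S : Finset ι, S.card = k ∧ x = ∑ i ∈ S, p i} := by
  have h : {x : ℝ | ∃ S : Finset ι, S.card = k ∧ x = ∑ i ∈ S, p i}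
      = (fun S : Finset ι => ∑ i ∈ S, p i) '' {S | S.card = k} := by
    ext x; simp [Set.mem_image, eq_comm]
  rw [h]
  exact (Set.toFinite _).image _ |>.bddAbove

lemma le_maxSum {ι : Type*} [Fintype ι] (p : ι → ℝ) (S : Finset ι) :
    ∑ i ∈ S, p i ≤ maxSum p S.card :=
  le_csSup (maxSum_bddAbove p _) ⟨S, rfl, rfl⟩

lemma maxSum_le {ι : Type*} [Fintype ι] {p : ι → ℝ} {k : ℕ} {c : ℝ}
    (hk : k ≤ Fintype.card ι) (h : ∀ S : Finset ι, S.card = k → ∑ i ∈ S, p i ≤ c) :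
    maxSum p k ≤ c := by
  obtain ⟨S, -, hS⟩ := Finset.exists_subset_card_eq (by simpa using hk :
    k ≤ (univ : Finset ι).card)
  refine csSup_le ⟨_, S, hS, rfl⟩ ?_
  rintro x ⟨S, hc, rfl⟩
  exact h S hc

lemma maxSum_of_gt {ι : Type*} [Fintype ι] (p : ι → ℝ) {k : ℕ}
    (hk : Fintype.card ι < k) : maxSum p k = 0 := by
  have h : {x : ℝ | ∃ S : Finset ι, S.card = k ∧ x = ∑ i ∈ S, p i} = ∅ := by
    ext x
    simp only [Set.mem_setOf_eq, Set.mem_empty_iff_false, iff_false]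
    rintro ⟨S, hc, -⟩
    have := S.card_le_univ
    omega
  rw [maxSum, h]
  exact Real.sSup_empty

/-- 100 × (p ⊗ φ) as a natural vector -/
def Pnat : Fin 4 × Fin 2 → ℕ := fun x => ![8,8,2,2] x.1 * ![3,2] x.2

/-- 100 × (q ⊗ φ) as a natural vector -/
def Qnat : Fin 4 × Fin 2 → ℕ := fun x => ![10,5,5,0] x.1 * ![3,2] x.2

/-- 100 × the maximal k-term partial sums of q ⊗ φ -/
def Cval : ℕ → ℕ := fun k => [0,30,50,65,80,90,100,100,100].getD k 0

/-- Two incomparable diagonal distributions for which the two-level state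
`(3/5, 2/5)` acts as a catalyst. -/
theorem catalysis_example :
    ¬ Maj (![2/5, 2/5, 1/10, 1/10] : Fin 4 → ℝ) (![1/2, 1/4, 1/4, 0] : Fin 4 → ℝ) ∧
    ¬ Maj (![1/2, 1/4, 1/4, 0] : Fin 4 → ℝ) (![2/5, 2/5, 1/10, 1/10] : Fin 4 → ℝ) ∧
    Maj (tensor (![2/5, 2/5, 1/10, 1/10] : Fin 4 → ℝ) (![3/5, 2/5] : Fin 2 → ℝ))
        (tensor (![1/2, 1/4, 1/4, 0] : Fin 4 → ℝ) (![3/5, 2/5] : Fin 2 → ℝ)) := by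
  set p : Fin 4 → ℝ := ![2/5, 2/5, 1/10, 1/10] with hp
  set q : Fin 4 → ℝ := ![1/2, 1/4, 1/4, 0] with hq
  set φ : Fin 2 → ℝ := ![3/5, 2/5] with hφ
  refine ⟨?_, ?_, ?_, ?_⟩
  · -- ¬ Maj p q, witness k = 2
    rintro ⟨-, h⟩
    have h2 := h 2
    have hub : maxSum q 2 ≤ 3/4 := by
      refine maxSum_le (by simp) fun S hS => ?_
      have key : ∀ S : Finset (Fin 4), S.card = 2 →
          ∑ i ∈ S, (![2,1,1,0] : Fin 4 → ℕ) i ≤ 3 := by decide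
      have hq4 : ∀ i, q i = ((![2,1,1,0] : Fin 4 → ℕ) i : ℝ) / 4 := by
        intro i; fin_cases i <;> norm_num [hq]
      calc ∑ i ∈ S, q i = ((∑ i ∈ S, (![2,1,1,0] : Fin 4 → ℕ) i : ℕ) : ℝ) / 4 := by
            rw [Nat.cast_sum, Finset.sum_div]; exact Finset.sum_congr rfl fun i _ => hq4 i
        _ ≤ 3/4 := by
            have := key S hS
            gcongr
            exact_mod_cast this
    have hlb : (4:ℝ)/5 ≤ maxSum p 2 := by
      have hcard : ({0,1} : Finset (Fin 4)).card = 2 := by decide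
      have := le_maxSum p {0,1}
      rw [hcard] at this
      refine le_trans (le_of_eq ?_) this
      rw [Finset.sum_pair (by decide : (0 : Fin 4) ≠ 1)]
      norm_num [hp]
    linarith
  · -- ¬ Maj q p, witness k = 1
    rintro ⟨-, h⟩
    have h1 := h 1
    have hub : maxSum p 1 ≤ 2/5 := by
      refine maxSum_le (by simp) fun S hS => ?_
      have key : ∀ S : Finset (Fin 4), S.card = 1 →
          ∑ i ∈ S, (![4,4,1,1] : Fin 4 → ℕ) i ≤ 4 := by decide
      have hp4 : ∀ i, p i = ((![4,4,1,1] : Fin 4 → ℕ) i : ℝ) / 10 := by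
        intro i; fin_cases i <;> norm_num [hp]
      calc ∑ i ∈ S, p i = ((∑ i ∈ S, (![4,4,1,1] : Fin 4 → ℕ) i : ℕ) : ℝ) / 10 := by
            rw [Nat.cast_sum, Finset.sum_div]; exact Finset.sum_congr rfl fun i _ => hp4 i
        _ ≤ 2/5 := by
            have := key S hS
            rw [show (2:ℝ)/5 = 4/10 by norm_num]
            gcongr
            exact_mod_cast this
    have hlb : (1:ℝ)/2 ≤ maxSum q 1 := by
      have hcard : ({0} : Finset (Fin 4)).card = 1 := by decide
      have := le_maxSum q {0}
      rw [hcard] at this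
      refine le_trans (le_of_eq ?_) this
      rw [Finset.sum_singleton]
      norm_num [hq]
    linarith
  all_goals {
  have hP : ∀ x : Fin 4 × Fin 2, tensor p φ x = ((Pnat x : ℕ) : ℝ) / 100 := by
    rintro ⟨i, j⟩; fin_cases i <;> fin_cases j <;> norm_num [tensor, Pnat, hp, hφ]
  have hQ : ∀ x : Fin 4 × Fin 2, tensor q φ x = ((Qnat x : ℕ) : ℝ) / 100 := by
    rintro ⟨i, j⟩; fin_cases i <;> fin_cases j <;> norm_num [tensor, Qnat, hq, hφ]
  have hPs : ∀ S : Finset (Fin 4 × Fin 2),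
      ∑ i ∈ S, tensor p φ i = ((∑ i ∈ S, Pnat i : ℕ) : ℝ) / 100 := fun S => by
    rw [Nat.cast_sum, Finset.sum_div]; exact Finset.sum_congr rfl fun x _ => hP x
  have hQs : ∀ S : Finset (Fin 4 × Fin 2),
      ∑ i ∈ S, tensor q φ i = ((∑ i ∈ S, Qnat i : ℕ) : ℝ) / 100 := fun S => by
    rw [Nat.cast_sum, Finset.sum_div]; exact Finset.sum_congr rfl fun x _ => hQ x
  first
  | -- equal total sums
    (rw [hPs univ, hQs univ,
      show ∑ i ∈ univ, Pnat i = 100 from by decide,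
      show ∑ i ∈ univ, Qnat i = 100 from by decide])
  | -- majorization inequalities
    (intro k
     by_cases hk : k ≤ 8
     · have key1 : ∀ S : Finset (Fin 4 × Fin 2), ∑ i ∈ S, Pnat i ≤ Cval S.card := by decide
       have key2 : ∀ k < 9, ∃ T : Finset (Fin 4 × Fin 2),
           T.card = k ∧ ∑ i ∈ T, Qnat i = Cval k := by decide
       have hcard8 : Fintype.card (Fin 4 × Fin 2) = 8 := by simp
       have hub : maxSum (tensor p φ) k ≤ (Cval k : ℝ) / 100 := by
         refine maxSum_le (by omega) fun S hS => ?_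
         rw [hPs S]
         have := key1 S
         rw [hS] at this
         have h2 : ((∑ i ∈ S, Pnat i : ℕ) : ℝ) ≤ (Cval k : ℝ) := by exact_mod_cast this
         linarith
       obtain ⟨T, hTc, hTs⟩ := key2 k (by omega)
       have hlb := le_maxSum (tensor q φ) T
       rw [hTc, hQs T, hTs] at hlb
       linarith
     · rw [maxSum_of_gt _ (by simp only [Fintype.card_prod, Fintype.card_fin]; omega), maxSum_of_gt _ (by simp only [Fintype.card_prod, Fintype.card_fin]; omega)]) }
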